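/- Let d ≥ 2, let g : ℝ^{d−1} → ℝ be twice continuously differentiable, and define the flattening map Φ : ℝ^d → ℝ^d by Φ(z₁,…,z_{d−1},z_d) = (z₁,…,z_{d−1}, z_d − g(z₁,…,z_{d−1})). Fix z ∈ ℝ^d, a drift vector μ ∈ ℝ^d and a symmetric diffusion matrix D ∈ ℝ^{d×d}, and write gᵢ and g_{ij} for the first and second partial derivatives of g evaluated at (z₁,…,z_{d−1}). Then for every twice continuously differentiable f : ℝ^d → ℝ, Σ_i μ_i ∂(f∘Φ)/∂z_i(z) + ½ Σ_{i,j} D_{ij} ∂²(f∘Φ)/∂z_i∂z_j(z) = Σ_i μ̂_i (∂f/∂z_i)(Φ(z)) + ½ Σ_{i,j} D̂_{ij} (∂²f/∂z_i∂z_j)(Φ(z)), where the transformed coefficients are μ̂_i = μ_i for i < d; μ̂_d = μ_d − Σ_{i<d} μ_i g_i − ½ Σ_{i,j<d} D_{ij} g_{ij}; D̂_{ij} = D_{ij} for i,j < d; D̂_{id} = D̂_{di} = D_{id} − Σ_{j<d} D_{ij} g_j for i < d; and D̂_{dd} = D_{dd} − 2 Σ_{i<d} D_{id} g_i + Σ_{i,j<d}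 D_{ij} g_i g_j. -/

import Mathlib

open Matrix

/-- Partial derivative of `f : ℝ^d → ℝ` in the `i`-th coordinate direction. -/
noncomputable def pd {d : ℕ} (f : (Fin d → ℝ) → ℝ) (i : Fin d) (z : Fin d → ℝ) : ℝ :=
  fderiv ℝ f z (Pi.single i 1)

/-- The flattening map `Φ(z₁,…,z_{d-1},z_d) = (z₁,…,z_{d-1}, z_d − g(z₁,…,z_{d-1}))`. -/
noncomputable def flatten {n : ℕ} (g : (Fin n → ℝ) → ℝ) (z : Fin (n + 1) → ℝ) :
    Fin (n + 1) → ℝ :=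
  Function.update z (Fin.last n) (z (Fin.last n) - g (Fin.init z))

/-- The transformed drift vector `μ̂`. -/
noncomputable def muHat {n : ℕ} (μ : Fin (n + 1) → ℝ) (D : Matrix (Fin (n + 1)) (Fin (n + 1)) ℝ)
    (g1 : Fin n → ℝ) (g2 : Fin n → Fin n → ℝ) : Fin (n + 1) → ℝ := fun i =>
  if i = Fin.last n then
    μ (Fin.last n) - (∑ j : Fin n, μ j.castSucc * g1 j)
      - (1 / 2) * ∑ j : Fin n, ∑ k : Fin n, D j.castSucc k.castSucc * g2 j k
  else μ i

/-- The transformed diffusion matrix `D̂`. -/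
noncomputable def DHat {n : ℕ} (D : Matrix (Fin (n + 1)) (Fin (n + 1)) ℝ)
    (g1 : Fin n → ℝ) : Matrix (Fin (n + 1)) (Fin (n + 1)) ℝ := fun i j =>
  if i = Fin.last n then
    if j = Fin.last n then
      D (Fin.last n) (Fin.last n) - 2 * (∑ k : Fin n, D k.castSucc (Fin.last n) * g1 k)
        + ∑ k : Fin n, ∑ l : Fin n, D k.castSucc l.castSucc * g1 k * g1 l
    else D j (Fin.last n) - ∑ k : Fin n, D j k.castSucc * g1 k
  else
    if j = Fin.last n then D i (Fin.last n) - ∑ k : Fin n, D i k.castSucc * g1 k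
    else D i j


noncomputable def initL (n : ℕ) : (Fin (n+1) → ℝ) →L[ℝ] (Fin n → ℝ) :=
  ContinuousLinearMap.pi (fun i => ContinuousLinearMap.proj i.castSucc)

lemma initL_apply {n : ℕ} (z : Fin (n+1) → ℝ) : initL n z = Fin.init z := rfl

lemma init_single_last {n : ℕ} : Fin.init (Pi.single (Fin.last n) 1 : Fin (n+1) → ℝ) = 0 := by
  funext k
  simp [Fin.init, Pi.single_apply, (Fin.castSucc_lt_last k).ne]

lemma init_single_castSucc {n : ℕ} (k : Fin n) :
    Fin.init (Pi.single k.castSucc 1 : Fin (n+1) → ℝ) = Pi.single k 1 := by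
  funext m
  simp [Fin.init, Pi.single_apply, Fin.castSucc_inj]

lemma flatten_eq {n : ℕ} (g : (Fin n → ℝ) → ℝ) (z : Fin (n+1) → ℝ) :
    flatten g z = z - g (Fin.init z) • (Pi.single (Fin.last n) 1 : Fin (n+1) → ℝ) := by
  funext i
  by_cases h : i = Fin.last n <;>
    simp [flatten, Function.update, h, Pi.single_apply]

lemma hasFDerivAt_flatten {n : ℕ} (g : (Fin n → ℝ) → ℝ) (hg : ContDiff ℝ 2 g)
    (w : Fin (n+1) → ℝ) :
    HasFDerivAt (flatten g)
      (ContinuousLinearMap.id ℝ _ -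
        ((fderiv ℝ g (Fin.init w)).comp (initL n)).smulRight (Pi.single (Fin.last n) 1)) w := by
  have h : flatten g = fun z => z - g (initL n z) • (Pi.single (Fin.last n) 1 : Fin (n+1) → ℝ) :=
    funext (flatten_eq g)
  rw [h]
  exact (hasFDerivAt_id w).sub
    ((((hg.differentiable two_ne_zero (initL n w)).hasFDerivAt.comp w
      (initL n).hasFDerivAt)).smul_const _)

-- second partial of a C² function
lemma pd_pd_eq {d : ℕ} (f : (Fin d → ℝ) → ℝ) (hf' : Differentiable ℝ (fderiv ℝ f))
    (i j : Fin d) (y : Fin d → ℝ) :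
    pd (pd f i) j y = fderiv ℝ (fderiv ℝ f) y (Pi.single j 1) (Pi.single i 1) := by
  have h : HasFDerivAt (fun w => fderiv ℝ f w (Pi.single i 1))
      (((fderiv ℝ (fderiv ℝ f) y).flip) (Pi.single i 1)) y := by
    have := (hf' y).hasFDerivAt.clm_apply (hasFDerivAt_const (Pi.single i 1) y)
    simpa using this
  have e : pd f i = fun w => fderiv ℝ f w (Pi.single i 1) := rfl
  simp only [pd, e]
  rw [h.fderiv]
  rfl

-- first derivative of the composite
lemma pd_comp_eq {n : ℕ} (g : (Fin n → ℝ) → ℝ) (hg : ContDiff ℝ 2 g)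
    (f : (Fin (n+1) → ℝ) → ℝ) (hf : ContDiff ℝ 2 f) (i : Fin (n+1)) (w : Fin (n+1) → ℝ) :
    pd (f ∘ flatten g) i w
      = fderiv ℝ f (flatten g w) (Pi.single i 1)
        - fderiv ℝ g (Fin.init w) (Fin.init (Pi.single i 1 : Fin (n+1) → ℝ))
          * fderiv ℝ f (flatten g w) (Pi.single (Fin.last n) 1) := by
  have hc : HasFDerivAt (f ∘ flatten g)
      ((fderiv ℝ f (flatten g w)).comp
        (ContinuousLinearMap.id ℝ _ -
          ((fderiv ℝ g (Fin.init w)).comp (initL n)).smulRight (Pi.single (Fin.last n) 1))) w :=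
    (hf.differentiable two_ne_zero (flatten g w)).hasFDerivAt.comp w (hasFDerivAt_flatten g hg w)
  simp only [pd]
  rw [hc.fderiv]
  simp [initL_apply, mul_comm]

lemma pd_pd_comp_eq {n : ℕ} (g : (Fin n → ℝ) → ℝ) (hg : ContDiff ℝ 2 g)
    (f : (Fin (n+1) → ℝ) → ℝ) (hf : ContDiff ℝ 2 f) (i j : Fin (n+1)) (z : Fin (n+1) → ℝ) :
    pd (pd (f ∘ flatten g) i) j z
      = (fderiv ℝ (fderiv ℝ f) (flatten g z) (Pi.single j 1) (Pi.single i 1)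
          - fderiv ℝ g (Fin.init z) (Fin.init (Pi.single j 1 : Fin (n+1) → ℝ))
            * fderiv ℝ (fderiv ℝ f) (flatten g z) (Pi.single (Fin.last n) 1) (Pi.single i 1))
        - (fderiv ℝ (fderiv ℝ g) (Fin.init z) (Fin.init (Pi.single j 1 : Fin (n+1) → ℝ))
              (Fin.init (Pi.single i 1 : Fin (n+1) → ℝ))
            * fderiv ℝ f (flatten g z) (Pi.single (Fin.last n) 1)
          + fderiv ℝ g (Fin.init z) (Fin.init (Pi.single i 1 : Fin (n+1) → ℝ))
            * (fderiv ℝ (fderiv ℝ f) (flatten g z) (Pi.single j 1) (Pi.single (Fin.last n) 1)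
              - fderiv ℝ g (Fin.init z) (Fin.init (Pi.single j 1 : Fin (n+1) → ℝ))
                * fderiv ℝ (fderiv ℝ f) (flatten g z) (Pi.single (Fin.last n) 1)
                  (Pi.single (Fin.last n) 1))) := by
  have hfd' : Differentiable ℝ (fderiv ℝ f) :=
    (hf.fderiv_right (m := 1) (le_refl 2)).differentiable one_ne_zero
  have hgd' : Differentiable ℝ (fderiv ℝ g) :=
    (hg.fderiv_right (m := 1) (le_refl 2)).differentiable one_ne_zero
  have hA : HasFDerivAt (fun w => fderiv ℝ f (flatten g w) (Pi.single i 1))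
      ((((fderiv ℝ (fderiv ℝ f) (flatten g z)).comp
        (ContinuousLinearMap.id ℝ _ -
          ((fderiv ℝ g (Fin.init z)).comp (initL n)).smulRight
            (Pi.single (Fin.last n) 1))).flip) (Pi.single i 1)) z := by
    have hc := (hfd' (flatten g z)).hasFDerivAt.comp z (hasFDerivAt_flatten g hg z)
    simpa using hc.clm_apply (hasFDerivAt_const (Pi.single i 1 : Fin (n+1) → ℝ) z)
  have hC : HasFDerivAt (fun w => fderiv ℝ f (flatten g w) (Pi.single (Fin.last n) 1))
      ((((fderiv ℝ (fderiv ℝ f) (flatten g z)).comp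
        (ContinuousLinearMap.id ℝ _ -
          ((fderiv ℝ g (Fin.init z)).comp (initL n)).smulRight
            (Pi.single (Fin.last n) 1))).flip) (Pi.single (Fin.last n) 1)) z := by
    have hc := (hfd' (flatten g z)).hasFDerivAt.comp z (hasFDerivAt_flatten g hg z)
    simpa using hc.clm_apply (hasFDerivAt_const (Pi.single (Fin.last n) 1 : Fin (n+1) → ℝ) z)
  have hB : HasFDerivAt
      (fun w => fderiv ℝ g (Fin.init w) (Fin.init (Pi.single i 1 : Fin (n+1) → ℝ)))
      ((((fderiv ℝ (fderiv ℝ g) (Fin.init z)).comp (initL n)).flip)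
        (Fin.init (Pi.single i 1 : Fin (n+1) → ℝ))) z := by
    have hc : HasFDerivAt (fun w => fderiv ℝ g (Fin.init w))
        ((fderiv ℝ (fderiv ℝ g) (Fin.init z)).comp (initL n)) z :=
      (hgd' (Fin.init z)).hasFDerivAt.comp z (initL n).hasFDerivAt
    simpa using hc.clm_apply
      (hasFDerivAt_const (Fin.init (Pi.single i 1 : Fin (n+1) → ℝ)) z)
  have hsum := hA.fun_sub (hB.fun_mul hC)
  have e : pd (f ∘ flatten g) i = fun w =>
      fderiv ℝ f (flatten g w) (Pi.single i 1)
        - fderiv ℝ g (Fin.init w) (Fin.init (Pi.single i 1 : Fin (n+1) → ℝ))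
          * fderiv ℝ f (flatten g w) (Pi.single (Fin.last n) 1) :=
    funext (pd_comp_eq g hg f hf i)
  simp only [pd, e]
  rw [hsum.fderiv]
  simp [initL_apply, mul_comm, mul_assoc, mul_left_comm]
  ring

set_option maxHeartbeats 1000000 in
lemma key_algebra {n : ℕ} (μ c γ : Fin (n+1) → ℝ)
    (D : Matrix (Fin (n+1)) (Fin (n+1)) ℝ) (Hm Gm : Fin (n+1) → Fin (n+1) → ℝ)
    (hD : ∀ a b, D a b = D b a)
    (hγ : γ (Fin.last n) = 0)
    (hG1 : ∀ a, Gm a (Fin.last n) = 0) (hG2 : ∀ a, Gm (Fin.last n) a = 0) :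
    ∑ a, μ a * (c a - γ a * c (Fin.last n))
      + (1/2) * ∑ a, ∑ b, D a b *
          ((Hm b a - γ b * Hm (Fin.last n) a)
            - (Gm b a * c (Fin.last n)
              + γ a * (Hm b (Fin.last n) - γ b * Hm (Fin.last n) (Fin.last n))))
    = ∑ a, muHat μ D (fun k => γ k.castSucc) (fun k l => Gm l.castSucc k.castSucc) a * c a
      + (1/2) * ∑ a, ∑ b, DHat D (fun k => γ k.castSucc) a b * Hm b a := by
  simp only [muHat, DHat, Fin.sum_univ_castSucc, (Fin.castSucc_lt_last _).ne, if_false,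
    if_true, hγ, hG1, hG2, zero_mul, mul_zero, sub_zero, add_zero, zero_add]
  simp only [mul_sub, sub_mul, mul_add, add_mul, Finset.sum_sub_distrib,
    Finset.sum_add_distrib, Finset.mul_sum, Finset.sum_mul]
  have e1 : ∑ x : Fin n, ∑ x_1 : Fin n,
      1 / 2 * D x.castSucc x_1.castSucc * Gm x_1.castSucc x.castSucc * c (Fin.last n)
      = ∑ x : Fin n, ∑ x_1 : Fin n,
      1 / 2 * D x.castSucc x_1.castSucc * c (Fin.last n) * Gm x_1.castSucc x.castSucc := by
    refine Finset.sum_congr rfl fun x _ => Finset.sum_congr rfl fun y _ => by ring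
  have e2 : ∑ x : Fin n, ∑ x_1 : Fin n,
      1 / 2 * D x.castSucc x_1.castSucc * γ x_1.castSucc * Hm x.castSucc (Fin.last n)
      = ∑ x : Fin n, ∑ x_1 : Fin n,
      1 / 2 * D x.castSucc x_1.castSucc * γ x.castSucc * Hm x_1.castSucc (Fin.last n) := by
    rw [Finset.sum_comm]
    refine Finset.sum_congr rfl fun x _ => Finset.sum_congr rfl fun y _ => by rw [hD]
  have e3 : ∑ x : Fin n, 1 / 2 * D (Fin.last n) x.castSucc * γ x.castSucc *
        Hm (Fin.last n) (Fin.last n)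
      = ∑ x : Fin n, 1 / 2 * D x.castSucc (Fin.last n) * γ x.castSucc *
        Hm (Fin.last n) (Fin.last n) := by
    refine Finset.sum_congr rfl fun x _ => by rw [hD]
  have e4 : ∑ x : Fin n, 1 / 2 * D (Fin.last n) x.castSucc * Hm x.castSucc (Fin.last n)
      = ∑ x : Fin n, 1 / 2 * D x.castSucc (Fin.last n) * Hm x.castSucc (Fin.last n) := by
    refine Finset.sum_congr rfl fun x _ => by rw [hD]
  have e5 : ∑ x : Fin n, 1 * D x.castSucc (Fin.last n) * γ x.castSucc *
        Hm (Fin.last n) (Fin.last n)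
      = ∑ x : Fin n, 1 / 2 * D x.castSucc (Fin.last n) * γ x.castSucc *
          Hm (Fin.last n) (Fin.last n)
        + ∑ x : Fin n, 1 / 2 * D x.castSucc (Fin.last n) * γ x.castSucc *
          Hm (Fin.last n) (Fin.last n) := by
    rw [← Finset.sum_add_distrib]
    refine Finset.sum_congr rfl fun x _ => by ring
  have e6 : ∑ x : Fin n, ∑ x_1 : Fin n,
      D x.castSucc x_1.castSucc * Hm x_1.castSucc x.castSucc * (1 / 2)
      = ∑ x : Fin n, ∑ x_1 : Fin n,
      1 / 2 * D x.castSucc x_1.castSucc * Hm x_1.castSucc x.castSucc := by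
    refine Finset.sum_congr rfl fun x _ => Finset.sum_congr rfl fun y _ => by ring
  ring_nf at e2 e4 ⊢
  have eA : ∑ x : Fin n, μ x.castSucc * γ x.castSucc * c (Fin.last n)
      = ∑ x : Fin n, c (Fin.last n) * μ x.castSucc * γ x.castSucc :=
    Finset.sum_congr rfl fun x _ => by ring
  have eC : ∑ x : Fin n, Hm (Fin.last n) (Fin.last n) * D (Fin.last n) x.castSucc * γ x.castSucc * (1 / 2)
      = ∑ x : Fin n, Hm (Fin.last n) (Fin.last n) * D x.castSucc (Fin.last n) * γ x.castSucc * (1 / 2) :=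
    Finset.sum_congr rfl fun x _ => by rw [hD]
  have eE : ∑ x : Fin n, Hm (Fin.last n) (Fin.last n) * D x.castSucc (Fin.last n) * γ x.castSucc
      = ∑ x : Fin n, Hm (Fin.last n) (Fin.last n) * D x.castSucc (Fin.last n) * γ x.castSucc * (1 / 2)
        + ∑ x : Fin n, Hm (Fin.last n) (Fin.last n) * D x.castSucc (Fin.last n) * γ x.castSucc * (1 / 2) := by
    rw [← Finset.sum_add_distrib]
    exact Finset.sum_congr rfl fun x _ => by ring
  have eF : ∑ x : Fin n, ∑ x_1 : Fin n,
        D x.castSucc x_1.castSucc * γ x.castSucc * γ x_1.castSucc * Hm (Fin.last n) (Fin.last n) * (1 / 2)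
      = ∑ x : Fin n, ∑ x_1 : Fin n,
        Hm (Fin.last n) (Fin.last n) * D x.castSucc x_1.castSucc * γ x.castSucc * γ x_1.castSucc * (1 / 2) :=
    Finset.sum_congr rfl fun x _ => Finset.sum_congr rfl fun y _ => by ring
  linarith [e2, e4, eA, eC, eE, eF]

/-- Under the flattening change of coordinates `Φ(v, y) = (v, y − g(v))`, the backward
Kolmogorov operator with coefficients `μ, D` applied to `f ∘ Φ` at `z` equals the operator
with the transformed coefficients `μ̂, D̂` applied to `f` at `Φ(z)`. -/
theorem generator_flattening_change_of_coordinates (n : ℕ) (hn : 1 ≤ n)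
    (g : (Fin n → ℝ) → ℝ) (hg : ContDiff ℝ 2 g)
    (z μ : Fin (n + 1) → ℝ) (D : Matrix (Fin (n + 1)) (Fin (n + 1)) ℝ) (hD : D.IsSymm)
    (f : (Fin (n + 1) → ℝ) → ℝ) (hf : ContDiff ℝ 2 f) :
    (∑ i, μ i * pd (f ∘ flatten g) i z)
        + (1 / 2) * ∑ i, ∑ j, D i j * pd (pd (f ∘ flatten g) i) j z =
      (∑ i, muHat μ D
            (fun k => fderiv ℝ g (Fin.init z) (Pi.single k 1))
            (fun k l => fderiv ℝ (fun v => fderiv ℝ g v (Pi.single k 1)) (Fin.init z)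
              (Pi.single l 1)) i
          * pd f i (flatten g z))
        + (1 / 2) * ∑ i, ∑ j, DHat D
            (fun k => fderiv ℝ g (Fin.init z) (Pi.single k 1)) i j
          * pd (pd f i) j (flatten g z) := by
  have hgd' : Differentiable ℝ (fderiv ℝ g) :=
    (hg.fderiv_right (m := 1) (le_refl 2)).differentiable one_ne_zero
  have hfd' : Differentiable ℝ (fderiv ℝ f) :=
    (hf.fderiv_right (m := 1) (le_refl 2)).differentiable one_ne_zero
  have hg1fun : (fun k : Fin n => fderiv ℝ g (Fin.init z) (Pi.single k 1))
      = fun k => fderiv ℝ g (Fin.init z)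
          (Fin.init (Pi.single k.castSucc 1 : Fin (n+1) → ℝ)) := by
    funext k; rw [init_single_castSucc]
  have hg2fun : (fun k l : Fin n => fderiv ℝ (fun v => fderiv ℝ g v (Pi.single k 1))
        (Fin.init z) (Pi.single l 1))
      = fun k l => fderiv ℝ (fderiv ℝ g) (Fin.init z)
          (Fin.init (Pi.single l.castSucc 1 : Fin (n+1) → ℝ))
          (Fin.init (Pi.single k.castSucc 1 : Fin (n+1) → ℝ)) := by
    funext k l
    rw [init_single_castSucc, init_single_castSucc]
    exact pd_pd_eq g hgd' k l (Fin.init z)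
  rw [hg1fun, hg2fun]
  simp only [pd_pd_comp_eq g hg f hf, pd_pd_eq f hfd']
  simp only [pd_comp_eq g hg f hf]
  simp only [pd]
  exact key_algebra μ
    (fun a => fderiv ℝ f (flatten g z) (Pi.single a 1))
    (fun a => fderiv ℝ g (Fin.init z) (Fin.init (Pi.single a 1 : Fin (n+1) → ℝ)))
    D
    (fun a b => fderiv ℝ (fderiv ℝ f) (flatten g z) (Pi.single a 1) (Pi.single b 1))
    (fun a b => fderiv ℝ (fderiv ℝ g) (Fin.init z)
      (Fin.init (Pi.single a 1 : Fin (n+1) → ℝ)) (Fin.init (Pi.single b 1 : Fin (n+1) → ℝ)))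
    (fun a b => hD.apply b a)
    (by simp [init_single_last])
    (fun a => by simp [init_single_last])
    (fun a => by simp [init_single_last])
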